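/- A numerical semigroup S minimally generated by three elements has at most 2 pseudo-Frobenius numbers: |PF(S)| ≤ 2. -/

import Mathlib

open scoped Classical

/-- A numerical semigroup: a cofinite additive submonoid of ℕ. -/
def IsNumericalSemigroup (S : Set ℕ) : Prop :=
  0 ∈ S ∧ (∀ a ∈ S, ∀ b ∈ S, a + b ∈ S) ∧ Sᶜ.Finite

/-- The set of nonnegative integer combinations of `n 0, …, n (d-1)`. -/
def genBy {d : ℕ} (n : Fin d → ℕ) : Set ℕ :=
  {m | ∃ a : Fin d → ℕ, m = ∑ i, a i * n i}

/-- `n` lists the (distinct) minimal generators of `S`: they generate `S` and each is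
irreducible (nonzero and not a sum of two nonzero elements of `S`). -/
def IsMinGen {d : ℕ} (S : Set ℕ) (n : Fin d → ℕ) : Prop :=
  S = genBy n ∧ Function.Injective n ∧
    ∀ i, n i ≠ 0 ∧ ¬∃ a ∈ S, ∃ b ∈ S, a ≠ 0 ∧ b ≠ 0 ∧ n i = a + b

/-- The squarefree divisor complex of `m` in `S` w.r.t. the generators `n`:
faces are the `F ⊆ [d]` with `m - ∑_{i ∈ F} n i ∈ S`. -/
def sdc {d : ℕ} (S : Set ℕ) (n : Fin d → ℕ) (m : ℕ) : Set (Finset (Fin d)) :=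
  {F | ∃ s ∈ S, m = ∑ i ∈ F, n i + s}

/-- Euler characteristic of the squarefree divisor complex. -/
noncomputable def eulerChar {d : ℕ} (S : Set ℕ) (n : Fin d → ℕ) (m : ℕ) : ℤ :=
  ∑ F : Finset (Fin d), if F ∈ sdc S n m then (-1 : ℤ) ^ F.card else 0

/-- The set of pseudo-Frobenius numbers of `S` (as integers). -/
def PF (S : Set ℕ) : Set ℤ :=
  {x | (¬∃ y ∈ S, (y : ℤ) = x) ∧ ∀ s ∈ S, s ≠ 0 → ∃ y ∈ S, (y : ℤ) = x + s}

namespace PFProof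

variable {S : Set ℕ} {n : Fin 3 → ℕ}

/-- Apéry element of `S` w.r.t. `p`: in `S` but not in `p + S`. -/
def Ape (S : Set ℕ) (p w : ℕ) : Prop :=
  w ∈ S ∧ ¬∃ s ∈ S, w = p + s

lemma add_mul_mem (hS : IsNumericalSemigroup S) {s : ℕ} (hs : s ∈ S) {p : ℕ} (hp : p ∈ S)
    (k : ℕ) : s + k * p ∈ S := by
  induction k with
  | zero => simpa using hs
  | succ k ih => have := hS.2.1 _ ih _ hp; rw [Nat.succ_mul, ← add_assoc]; exact this

lemma ape_unique (hS : IsNumericalSemigroup S) {p : ℕ} (hp : p ∈ S) {w w' : ℕ}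
    (hw : Ape S p w) (hw' : Ape S p w') (h : w % p = w' % p) : w = w' := by
  rcases Nat.eq_zero_or_pos p with hp0 | hp0
  · exact absurd ⟨w, hw.1, by omega⟩ hw.2
  have key : ∀ u v : ℕ, Ape S p u → Ape S p v → u % p = v % p → u ≤ v → u = v := by
    intro u v hu hv huv hle
    obtain ⟨k, hk⟩ := (Nat.modEq_iff_dvd' hle).mp huv
    rcases Nat.eq_zero_or_pos k with rfl | hk0
    · omega
    · exfalso
      refine hv.2 ⟨u + (k - 1) * p, add_mul_mem hS hu.1 hp _, ?_⟩
      have h1 : (k - 1) * p + p = k * p := by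
        cases k with | zero => omega | succ k => rw [Nat.succ_mul]; simp
      have h2 : p * k = k * p := mul_comm _ _
      omega
  rcases le_total w w' with hle | hle
  · exact key _ _ hw hw' h hle
  · exact (key _ _ hw' hw h.symm hle).symm

lemma ape_exists (hS : IsNumericalSemigroup S) {p : ℕ} (hp0 : 0 < p) :
    ∀ m ∈ S, ∃ w, Ape S p w ∧ w % p = m % p := by
  intro m
  induction m using Nat.strong_induction_on with
  | _ m ih =>
    intro hm
    by_cases h : ∃ s ∈ S, m = p + s
    · obtain ⟨s, hs, rfl⟩ := h
      obtain ⟨w, hw, hmod⟩ := ih s (by omega) hs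
      exact ⟨w, hw, by rw [hmod, Nat.add_mod_left]⟩
    · exact ⟨m, ⟨hm, h⟩, rfl⟩

lemma rep_unique {q r d q' r' : ℕ} (hr0 : 0 < r)
    (hq : q = d * q') (hr : r = d * r') (hcop : Nat.Coprime q' r') (hd0 : 0 < d)
    {x y x' y' : ℕ} (hx : x < r') (hx' : x' < r')
    (h : x * q + y * r = x' * q + y' * r) : x = x' ∧ y = y' := by
  have key : ∀ a b a' b' : ℕ, a < r' → a' ≤ a → a * q + b * r = a' * q + b' * r →
      a = a' ∧ b = b' := by
    intro a b a' b' ha ha' hab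
    obtain ⟨c, rfl⟩ := Nat.exists_eq_add_of_le ha'
    rw [add_mul] at hab
    have h1 : c * q + b * r = b' * r := by omega
    have h2 : b * r ≤ b' * r := by omega
    have hb : b ≤ b' := Nat.le_of_mul_le_mul_right h2 hr0
    obtain ⟨e, rfl⟩ := Nat.exists_eq_add_of_le hb
    rw [add_mul] at h1
    have h3 : c * q = e * r := by omega
    rw [hq, hr] at h3
    have h4 : d * (c * q') = d * (e * r') := by
      calc d * (c * q') = c * (d * q') := by ring
        _ = e * (d * r') := h3
        _ = d * (e * r') := by ring
    have h5 : c * q' = e * r' := Nat.eq_of_mul_eq_mul_left hd0 h4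
    have h6 : r' ∣ c := Nat.Coprime.dvd_of_dvd_mul_right hcop.symm ⟨e, by rw [h5, mul_comm]⟩
    have hc0 : c = 0 := Nat.eq_zero_of_dvd_of_lt h6 (by omega)
    subst hc0
    have he0 : e = 0 := by
      have h7 : e * r' = 0 := by omega
      rcases Nat.mul_eq_zero.mp h7 with h8 | h8
      · exact h8
      · omega
    omega
  rcases le_total x' x with hle | hle
  · exact key _ _ _ _ hx hle h
  · obtain ⟨h1, h2⟩ := key _ _ _ _ hx' hle h.symm
    omega


lemma mem_gen (hmin : IsMinGen S n) (i : Fin 3) : n i ∈ S := by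
  rw [hmin.1]
  refine ⟨fun j => if j = i then 1 else 0, ?_⟩
  simp [Finset.sum_ite_eq', ite_mul]

lemma mem_iff (hmin : IsMinGen S n) (m : ℕ) :
    m ∈ S ↔ ∃ a b c : ℕ, m = a * n 0 + b * n 1 + c * n 2 := by
  rw [hmin.1]
  constructor
  · rintro ⟨a, rfl⟩
    exact ⟨a 0, a 1, a 2, by rw [Fin.sum_univ_three]⟩
  · rintro ⟨a, b, c, rfl⟩
    exact ⟨![a, b, c], by rw [Fin.sum_univ_three]; simp⟩

lemma comb_mem (hmin : IsMinGen S n) (a b c : ℕ) :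
    a * n 0 + b * n 1 + c * n 2 ∈ S := (mem_iff hmin _).2 ⟨a, b, c, rfl⟩

lemma qr_mem (hmin : IsMinGen S n) (x y : ℕ) : x * n 1 + y * n 2 ∈ S := by
  simpa using comb_mem hmin 0 x y

/-- Apéry elements (w.r.t. `n 0`) lie in the monoid generated by `n 1, n 2`. -/
lemma ape_rep (hmin : IsMinGen S n) {w : ℕ} (hw : Ape S (n 0) w) :
    ∃ x y : ℕ, w = x * n 1 + y * n 2 := by
  obtain ⟨a, x, y, hrep⟩ := (mem_iff hmin w).1 hw.1
  rcases Nat.eq_zero_or_pos a with rfl | ha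
  · exact ⟨x, y, by simpa using hrep⟩
  · exfalso
    obtain ⟨a0, rfl⟩ : ∃ a0, a = a0 + 1 := ⟨a - 1, by omega⟩
    refine hw.2 ⟨a0 * n 0 + x * n 1 + y * n 2, comb_mem hmin _ _ _, ?_⟩
    rw [hrep]; ring

/-- Canonical representation with small `n 1`-coordinate. -/
lemma canon {q r q' r' : ℕ} (hrq : r' * q = q' * r) (hr'0 : 0 < r') {w x y : ℕ}
    (h : w = x * q + y * r) : ∃ X Y : ℕ, X < r' ∧ w = X * q + Y * r := by
  refine ⟨x % r', y + (x / r') * q', Nat.mod_lt _ hr'0, ?_⟩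
  have hx : x = r' * (x / r') + x % r' := (Nat.div_add_mod x r').symm
  calc w = (r' * (x / r') + x % r') * q + y * r := by rw [← hx, h]
    _ = (x % r') * q + (x / r') * (r' * q) + y * r := by ring
    _ = (x % r') * q + (x / r') * (q' * r) + y * r := by rw [hrq]
    _ = (x % r') * q + (y + (x / r') * q') * r := by ring

lemma pf_nat {f : ℕ} (hf : (f : ℤ) ∈ PF S) :
    f ∉ S ∧ ∀ s ∈ S, s ≠ 0 → f + s ∈ S := by
  constructor
  · intro hfS; exact hf.1 ⟨f, hfS, rfl⟩
  · intro s hs hs0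
    obtain ⟨y, hy, hyeq⟩ := hf.2 s hs hs0
    have : y = f + s := by exact_mod_cast hyeq
    rwa [← this]

lemma pf_nonneg (hS : IsNumericalSemigroup S) (hmin : IsMinGen S n) {x : ℤ}
    (hx : x ∈ PF S) : 0 ≤ x := by
  by_contra hneg
  push_neg at hneg
  have hp0 : n 0 ≠ 0 := (hmin.2.2 0).1
  have hex : ∃ k, 0 < k ∧ k ∈ S := ⟨n 0, Nat.pos_of_ne_zero hp0, mem_gen hmin 0⟩
  obtain ⟨y, hy, hyeq⟩ := hx.2 (Nat.find hex) (Nat.find_spec hex).2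
    (by have := (Nat.find_spec hex).1; omega)
  have hy0 : y = 0 := by
    by_contra hy0
    have h1 : Nat.find hex ≤ y := Nat.find_min' hex ⟨Nat.pos_of_ne_zero hy0, hy⟩
    have h2 : (y : ℤ) < (Nat.find hex : ℤ) := by omega
    exact absurd h2 (by exact_mod_cast not_lt.mpr h1)
  subst hy0
  have hxval : x = -(Nat.find hex : ℤ) := by
    have : ((0 : ℕ) : ℤ) = x + (Nat.find hex : ℤ) := hyeq
    omega
  obtain ⟨i, hi⟩ : ∃ i : Fin 3, n i ≠ Nat.find hex := by
    by_contra h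
    push_neg at h
    have h01 : n 0 = n 1 := (h 0).trans (h 1).symm
    exact absurd (hmin.2.1 h01) (by decide)
  obtain ⟨z, hz, hzeq⟩ := hx.2 (n i) (mem_gen hmin i) (hmin.2.2 i).1
  have hzval : n i = Nat.find hex + z := by
    rw [hxval] at hzeq
    have h3 : (z : ℤ) + (Nat.find hex : ℤ) = (n i : ℤ) := by omega
    have h4 : z + Nat.find hex = n i := by exact_mod_cast h3
    omega
  have hz0 : z ≠ 0 := by intro h; subst h; exact hi (by omega)
  exact (hmin.2.2 i).2
    ⟨Nat.find hex, (Nat.find_spec hex).2, z, hz, by have := (Nat.find_spec hex).1; omega,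
      hz0, hzval⟩


lemma main (hS : IsNumericalSemigroup S) (hmin : IsMinGen S n) {f1 f2 f3 : ℕ}
    (hf1 : (f1 : ℤ) ∈ PF S) (hf2 : (f2 : ℤ) ∈ PF S) (hf3 : (f3 : ℤ) ∈ PF S)
    (h12 : f1 ≠ f2) (h13 : f1 ≠ f3) (h23 : f2 ≠ f3) : False := by
  -- basic positivity
  have hp0 : 0 < n 0 := Nat.pos_of_ne_zero (hmin.2.2 0).1
  have hq0 : 0 < n 1 := Nat.pos_of_ne_zero (hmin.2.2 1).1
  have hr0 : 0 < n 2 := Nat.pos_of_ne_zero (hmin.2.2 2).1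
  have hpS : n 0 ∈ S := mem_gen hmin 0
  -- gcd data
  set d := Nat.gcd (n 1) (n 2) with hd
  have hd0 : 0 < d := Nat.gcd_pos_of_pos_left _ hq0
  set q' := n 1 / d with hq'
  set r' := n 2 / d with hr'
  have hdq : n 1 = d * q' := (Nat.mul_div_cancel' (Nat.gcd_dvd_left _ _)).symm
  have hdr : n 2 = d * r' := (Nat.mul_div_cancel' (Nat.gcd_dvd_right _ _)).symm
  have hcop : Nat.Coprime q' r' := Nat.coprime_div_gcd_div_gcd hd0
  have hr'0 : 0 < r' := by
    rcases Nat.eq_zero_or_pos r' with h | h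
    · rw [h, mul_zero] at hdr; omega
    · exact h
  have hrq : r' * n 1 = q' * n 2 := by
    have h1 : d * (r' * n 1) = d * (q' * n 2) := by
      calc d * (r' * n 1) = (d * r') * n 1 := by ring
        _ = n 2 * n 1 := by rw [← hdr]
        _ = (d * q') * n 2 := by rw [← hdq]; ring
        _ = d * (q' * n 2) := by ring
    exact Nat.eq_of_mul_eq_mul_left hd0 h1
  -- the staircase D
  set D : Set (ℕ × ℕ) :=
    {v | v.1 < r' ∧ Ape S (n 0) (v.1 * n 1 + v.2 * n 2)} with hD
  -- order ideal property
  have hDord : ∀ v ∈ D, ∀ a b : ℕ, a ≤ v.1 → b ≤ v.2 → (a, b) ∈ D := by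
    rintro ⟨vx, vy⟩ hv a b hax hby
    have hv1 : vx < r' := hv.1
    have hv3 : ¬∃ s ∈ S, vx * n 1 + vy * n 2 = n 0 + s := hv.2.2
    obtain ⟨c, rfl⟩ := Nat.exists_eq_add_of_le hax
    obtain ⟨e, rfl⟩ := Nat.exists_eq_add_of_le hby
    refine ⟨show a < r' by omega, qr_mem hmin a b, ?_⟩
    show ¬∃ s ∈ S, a * n 1 + b * n 2 = n 0 + s
    rintro ⟨s, hs, hval⟩
    refine hv3 ⟨s + (c * n 1 + e * n 2), hS.2.1 _ hs _ (qr_mem hmin c e), ?_⟩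
    have hexp : (a + c) * n 1 + (b + e) * n 2
        = (a * n 1 + b * n 2) + (c * n 1 + e * n 2) := by ring
    omega
  -- finiteness of D
  have hDfin : D.Finite := by
    obtain ⟨N, hN⟩ := hS.2.2.bddAbove
    have hsub : D ⊆ (Set.Iio r') ×ˢ (Set.Iic (N + n 0)) := by
      rintro ⟨vx, vy⟩ hv
      have hv3 : ¬∃ s ∈ S, vx * n 1 + vy * n 2 = n 0 + s := hv.2.2
      refine ⟨hv.1, ?_⟩
      simp only [Set.mem_Iic]
      by_contra hbig
      push_neg at hbig
      have hval : vy ≤ vx * n 1 + vy * n 2 := by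
        have : vy * 1 ≤ vy * n 2 := Nat.mul_le_mul_left vy hr0
        omega
      have hmem : vx * n 1 + vy * n 2 - n 0 ∈ S := by
        by_contra hc
        have := hN (show _ ∈ Sᶜ from hc)
        omega
      exact hv3 ⟨vx * n 1 + vy * n 2 - n 0, hmem, by omega⟩
    exact ((Set.finite_Iio r').prod (Set.finite_Iic (N + n 0))).subset hsub
  -- existence of maximal elements above any element
  have hmaxab : ∀ v ∈ D, ∃ m, m ∈ D ∧ v ≤ m ∧ ∀ u ∈ D, m ≤ u → u = m := by
    intro v hv
    have hEfin : {u | u ∈ D ∧ v ≤ u}.Finite := hDfin.subset (fun u hu => hu.1)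
    obtain ⟨m, hm, hmax⟩ := Set.Finite.exists_maximalFor (fun u => u.1 + u.2)
      {u | u ∈ D ∧ v ≤ u} hEfin ⟨v, hv, le_refl v⟩
    refine ⟨m, hm.1, hm.2, ?_⟩
    intro u hu hmu
    have huE : u ∈ {u | u ∈ D ∧ v ≤ u} := ⟨hu, le_trans hm.2 hmu⟩
    have h1 : u.1 + u.2 ≤ m.1 + m.2 := hmax (j := u) huE (by
      rcases hmu with ⟨ha, hb⟩
      exact add_le_add ha hb)
    rcases hmu with ⟨ha, hb⟩
    have : u.1 = m.1 ∧ u.2 = m.2 := by constructor <;> omega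
    exact Prod.ext this.1 this.2
  -- each PF element gives a maximal element of D
  have pfpoint : ∀ f : ℕ, (f : ℤ) ∈ PF S →
      ∃ P, P ∈ D ∧ (P.1 * n 1 + P.2 * n 2 = f + n 0) ∧ ∀ u ∈ D, P ≤ u → u = P := by
    intro f hf
    obtain ⟨hfS, hfadd⟩ := pf_nat hf
    have hwS : f + n 0 ∈ S := hfadd (n 0) hpS (by omega)
    have hw : Ape S (n 0) (f + n 0) := by
      refine ⟨hwS, ?_⟩
      rintro ⟨s, hs, heq⟩
      have : s = f := by omega
      exact hfS (this ▸ hs)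
    obtain ⟨x, y, hxy⟩ := ape_rep hmin hw
    obtain ⟨X, Y, hX, hrep⟩ := canon hrq hr'0 hxy
    refine ⟨(X, Y), ⟨hX, hrep ▸ hw⟩, hrep.symm, ?_⟩
    rintro ⟨ux, uy⟩ hu hle
    rcases hle with ⟨hle1, hle2⟩
    simp only at hle1 hle2
    obtain ⟨c, rfl⟩ := Nat.exists_eq_add_of_le hle1
    obtain ⟨e, rfl⟩ := Nat.exists_eq_add_of_le hle2
    by_contra hne
    have hce : 0 < c + e := by
      rcases Nat.eq_zero_or_pos (c + e) with h | h
      · exact absurd (Prod.ext (show X + c = X by omega) (show Y + e = Y by omega)) hne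
      · exact h
    have hs0 : 0 < c * n 1 + e * n 2 := by
      rcases Nat.eq_zero_or_pos c with rfl | hc
      · have h5 : 0 < e := by omega
        have := Nat.mul_le_mul_right (n 2) h5
        omega
      · have := Nat.mul_le_mul_right (n 1) hc
        omega
    have hfs : f + (c * n 1 + e * n 2) ∈ S := hfadd _ (qr_mem hmin c e) (by omega)
    have hu3 : ¬∃ s ∈ S, (X + c) * n 1 + (Y + e) * n 2 = n 0 + s := hu.2.2
    refine hu3 ⟨f + (c * n 1 + e * n 2), hfs, ?_⟩
    have hexp : (X + c) * n 1 + (Y + e) * n 2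
        = (X * n 1 + Y * n 2) + (c * n 1 + e * n 2) := by ring
    have hrep' : f + n 0 = X * n 1 + Y * n 2 := hrep
    omega
  -- the set of maximal elements
  set M : Set (ℕ × ℕ) := {v | v ∈ D ∧ ∀ u ∈ D, v ≤ u → u = v} with hM
  have hMD : M ⊆ D := fun v hv => hv.1
  have hMfin : M.Finite := hDfin.subset hMD
  have hMx : ∀ v ∈ M, ∀ u ∈ M, v.1 = u.1 → v = u := by
    intro v hv u hu hvu
    rcases le_total v.2 u.2 with h | h
    · exact (hv.2 u hu.1 ⟨le_of_eq hvu, h⟩).symm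
    · exact hu.2 v hv.1 ⟨le_of_eq hvu.symm, h⟩
  -- the three points
  obtain ⟨P1, hP1D, hP1v, hP1m⟩ := pfpoint f1 hf1
  obtain ⟨P2, hP2D, hP2v, hP2m⟩ := pfpoint f2 hf2
  obtain ⟨P3, hP3D, hP3v, hP3m⟩ := pfpoint f3 hf3
  have hP1M : P1 ∈ M := ⟨hP1D, hP1m⟩
  have hP2M : P2 ∈ M := ⟨hP2D, hP2m⟩
  have hP3M : P3 ∈ M := ⟨hP3D, hP3m⟩
  have hPne12 : P1 ≠ P2 := by intro h; rw [h, hP2v] at hP1v; omega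
  have hPne13 : P1 ≠ P3 := by intro h; rw [h, hP3v] at hP1v; omega
  have hPne23 : P2 ≠ P3 := by intro h; rw [h, hP3v] at hP2v; omega
  have hMne : M.Nonempty := ⟨P1, hP1M⟩
  -- select A with max x
  obtain ⟨A, hAM, hAmax⟩ := Set.Finite.exists_maximalFor Prod.fst M hMfin hMne
  have hAtop : ∀ m ∈ M, m.1 ≤ A.1 := by
    intro m hm
    by_contra h
    push_neg at h
    have := hAmax (j := m) hm (le_of_lt h)
    omega
  -- M2 nonempty
  have hM2ne : ∃ m ∈ M, m.1 < A.1 := by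
    by_cases h : P1.1 < A.1
    · exact ⟨P1, hP1M, h⟩
    · have hP1A : P1 = A := hMx P1 hP1M A hAM (by have := hAtop P1 hP1M; omega)
      refine ⟨P2, hP2M, ?_⟩
      have h2 : P2.1 ≤ A.1 := hAtop P2 hP2M
      rcases lt_or_eq_of_le h2 with h3 | h3
      · exact h3
      · exact absurd (hP1A.trans (hMx P2 hP2M A hAM h3).symm) hPne12
  obtain ⟨B, hBM2, hBmax⟩ := Set.Finite.exists_maximalFor Prod.fst
    {m | m ∈ M ∧ m.1 < A.1} (hMfin.subset (fun m hm => hm.1)) hM2ne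
  have hBM : B ∈ M := hBM2.1
  have hBA : B.1 < A.1 := hBM2.2
  have hBtop : ∀ m ∈ M, m.1 < A.1 → m.1 ≤ B.1 := by
    intro m hm hmA
    by_contra h
    push_neg at h
    have := hBmax (j := m) ⟨hm, hmA⟩ (le_of_lt h)
    omega
  -- M3 nonempty
  have hM3ne : ∃ m ∈ M, m.1 < B.1 := by
    by_contra hcon
    push_neg at hcon
    have key : ∀ P ∈ M, P.1 = A.1 ∨ P.1 = B.1 := by
      intro P hP
      have h1 : P.1 ≤ A.1 := hAtop P hP
      rcases lt_or_eq_of_le h1 with h2 | h2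
      · have h3 : P.1 ≤ B.1 := hBtop P hP h2
        have h4 : B.1 ≤ P.1 := hcon P hP
        right; omega
      · left; exact h2
    have k1 := key P1 hP1M
    have k2 := key P2 hP2M
    have k3 := key P3 hP3M
    have ne12 : P1.1 ≠ P2.1 := fun h => hPne12 (hMx P1 hP1M P2 hP2M h)
    have ne13 : P1.1 ≠ P3.1 := fun h => hPne13 (hMx P1 hP1M P3 hP3M h)
    have ne23 : P2.1 ≠ P3.1 := fun h => hPne23 (hMx P2 hP2M P3 hP3M h)
    rcases k1 with k1 | k1 <;> rcases k2 with k2 | k2 <;> rcases k3 with k3 | k3 <;> omega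
  obtain ⟨C, hCM3, hCmax⟩ := Set.Finite.exists_maximalFor Prod.fst
    {m | m ∈ M ∧ m.1 < B.1} (hMfin.subset (fun m hm => hm.1)) hM3ne
  have hCM : C ∈ M := hCM3.1
  have hCB : C.1 < B.1 := hCM3.2
  have hCtop : ∀ m ∈ M, m.1 < B.1 → m.1 ≤ C.1 := by
    intro m hm hmB
    by_contra h
    push_neg at h
    have := hCmax (j := m) ⟨hm, hmB⟩ (le_of_lt h)
    omega
  -- y-coordinates increase
  have hyAB : A.2 < B.2 := by
    by_contra h
    push_neg at h
    have := hBM.2 A hAM.1 ⟨le_of_lt hBA, h⟩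
    rw [this] at hBA; omega
  have hyBC : B.2 < C.2 := by
    by_contra h
    push_neg at h
    have := hCM.2 B hBM.1 ⟨le_of_lt hCB, h⟩
    rw [this] at hCB; omega
  have hAr' : A.1 < r' := hAM.1.1
  have hBr' : B.1 < r' := hBM.1.1
  -- key modular lemma
  have keymod : ∀ X Y : ℕ, X + 1 < r' → (X, Y + 1) ∈ D → (X + 1, Y) ∈ D →
      (X + 1, Y + 1) ∉ D → ((X + 1) * n 1 + (Y + 1) * n 2) % n 0 = 0 := by
    intro X Y hXr hN1 hN2 hnotD
    set V := (X + 1) * n 1 + (Y + 1) * n 2 with hV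
    have hVS : V ∈ S := qr_mem hmin _ _
    have hnotape : ¬ Ape S (n 0) V := fun hA => hnotD ⟨by omega, hA⟩
    obtain ⟨w, hw, hmod⟩ := ape_exists hS hp0 V hVS
    obtain ⟨x0, y0, hxy0⟩ := ape_rep hmin hw
    obtain ⟨ex, ey, hex, hweq⟩ := canon hrq hr'0 hxy0
    have hexD : (ex, ey) ∈ D := ⟨hex, hweq ▸ hw⟩
    rcases Nat.eq_zero_or_pos ex with hex0 | hexpos
    · rcases Nat.eq_zero_or_pos ey with hey0 | heypos
      · -- w = 0, so n 0 ∣ V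
        rw [hex0, hey0] at hweq
        simp at hweq
        rw [hweq] at hmod
        simpa using hmod.symm
      · -- ex = 0, ey ≥ 1 : contradiction
        exfalso
        obtain ⟨e0, rfl⟩ : ∃ e0, ey = e0 + 1 := ⟨ey - 1, by omega⟩
        have hE2 : (0, e0) ∈ D := hDord (ex, e0 + 1) (hex0 ▸ hexD) 0 e0 (by omega) (by omega)
        have hw2 : w = n 2 + (0 * n 1 + e0 * n 2) := by
          rw [hweq, hex0]; ring
        have hV2 : V = n 2 + ((X + 1) * n 1 + Y * n 2) := by rw [hV]; ring
        have hmod2 : (0 * n 1 + e0 * n 2) % n 0 = ((X + 1) * n 1 + Y * n 2) % n 0 := by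
          have h1 : Nat.ModEq (n 0) (n 2 + (0 * n 1 + e0 * n 2))
              (n 2 + ((X + 1) * n 1 + Y * n 2)) := by
            rw [← hw2, ← hV2]; exact hmod
          exact Nat.ModEq.add_left_cancel' (n 2) h1
        have heq := ape_unique hS hpS hE2.2 hN2.2 hmod2
        obtain ⟨hxx, -⟩ := rep_unique hr0 hdq hdr hcop hd0 (show 0 < r' by omega) (by omega) heq
        exact absurd (show (0 : ℕ) = X + 1 from hxx) (by omega)
    · -- ex ≥ 1 : w = V, contradiction
      exfalso
      obtain ⟨e0, rfl⟩ : ∃ e0, ex = e0 + 1 := ⟨ex - 1, by omega⟩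
      have hE1 : (e0, ey) ∈ D := hDord (e0 + 1, ey) hexD e0 ey (by omega) (by omega)
      have hw2 : w = n 1 + (e0 * n 1 + ey * n 2) := by rw [hweq]; ring
      have hV2 : V = n 1 + (X * n 1 + (Y + 1) * n 2) := by rw [hV]; ring
      have hmod2 : (e0 * n 1 + ey * n 2) % n 0 = (X * n 1 + (Y + 1) * n 2) % n 0 := by
        have h1 : Nat.ModEq (n 0) (n 1 + (e0 * n 1 + ey * n 2))
            (n 1 + (X * n 1 + (Y + 1) * n 2)) := by
          rw [← hw2, ← hV2]; exact hmod
        exact Nat.ModEq.add_left_cancel' (n 1) h1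
      have heq := ape_unique hS hpS hE1.2 hN1.2 hmod2
      obtain ⟨hxx, hyy⟩ := rep_unique hr0 hdq hdr hcop hd0 (by omega) (by omega) heq
      have hxx' : e0 = X := hxx
      have hyy' : ey = Y + 1 := hyy
      subst hxx'
      subst hyy'
      have hVw : V = w := by rw [hV, hweq]
      exact hnotape (hVw ▸ hw)
  -- first application: the corner between A and B
  have hnotD1 : (B.1 + 1, A.2 + 1) ∉ D := by
    intro hin
    obtain ⟨m, hmD, hmge, hmmax⟩ := hmaxab _ hin
    have hmM : m ∈ M := ⟨hmD, hmmax⟩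
    rcases hmge with ⟨hge1, hge2⟩
    simp only at hge1 hge2
    have hm1 : m.1 = A.1 := by
      have h1 : m.1 ≤ A.1 := hAtop m hmM
      by_contra h
      have h2 : m.1 ≤ B.1 := hBtop m hmM (by omega)
      omega
    have : m = A := hMx m hmM A hAM hm1
    rw [this] at hge2
    omega
  have hdvd1 : ((B.1 + 1) * n 1 + (A.2 + 1) * n 2) % n 0 = 0 :=
    keymod B.1 A.2 (by omega)
      (hDord B hBM.1 B.1 (A.2 + 1) (le_refl _) (by omega))
      (hDord A hAM.1 (B.1 + 1) A.2 (by omega) (le_refl _))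
      hnotD1
  -- second application: the corner between B and C
  have hnotD2 : (C.1 + 1, B.2 + 1) ∉ D := by
    intro hin
    obtain ⟨m, hmD, hmge, hmmax⟩ := hmaxab _ hin
    have hmM : m ∈ M := ⟨hmD, hmmax⟩
    rcases hmge with ⟨hge1, hge2⟩
    simp only at hge1 hge2
    rcases lt_trichotomy m.1 B.1 with h | h | h
    · exact absurd (hCtop m hmM h) (by omega)
    · have : m = B := hMx m hmM B hBM h
      rw [this] at hge2
      omega
    · have hm1 : m.1 = A.1 := by
        have h1 : m.1 ≤ A.1 := hAtop m hmM
        by_contra hh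
        have h2 : m.1 ≤ B.1 := hBtop m hmM (by omega)
        omega
      have : m = A := hMx m hmM A hAM hm1
      rw [this] at hge2
      omega
  have hdvd2 : ((C.1 + 1) * n 1 + (B.2 + 1) * n 2) % n 0 = 0 :=
    keymod C.1 B.2 (by omega)
      (hDord C hCM.1 C.1 (B.2 + 1) (le_refl _) (by omega))
      (hDord B hBM.1 (C.1 + 1) B.2 (by omega) (le_refl _))
      hnotD2
  -- final contradiction
  have hu : (0, B.2 - A.2) ∈ D := hDord C hCM.1 0 (B.2 - A.2) (by omega) (by omega)
  have hu' : (B.1 - C.1, 0) ∈ D := hDord A hAM.1 (B.1 - C.1) 0 (by omega) (by omega)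
  have he1 : (0 * n 1 + (B.2 - A.2) * n 2) + ((B.1 + 1) * n 1 + (A.2 + 1) * n 2)
      = (B.1 + 1) * n 1 + (B.2 + 1) * n 2 := by
    obtain ⟨t, ht⟩ := Nat.exists_eq_add_of_le (le_of_lt hyAB)
    rw [ht]
    have : A.2 + t - A.2 = t := by omega
    rw [this]; ring
  have he2 : ((B.1 - C.1) * n 1 + 0 * n 2) + ((C.1 + 1) * n 1 + (B.2 + 1) * n 2)
      = (B.1 + 1) * n 1 + (B.2 + 1) * n 2 := by
    obtain ⟨t, ht⟩ := Nat.exists_eq_add_of_le (le_of_lt hCB)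
    rw [ht]
    have : C.1 + t - C.1 = t := by omega
    rw [this]; ring
  have hmodeq : (0 * n 1 + (B.2 - A.2) * n 2) % n 0
      = ((B.1 - C.1) * n 1 + 0 * n 2) % n 0 := by
    have e1 : ((0 * n 1 + (B.2 - A.2) * n 2) + ((B.1 + 1) * n 1 + (A.2 + 1) * n 2)) % n 0
        = (0 * n 1 + (B.2 - A.2) * n 2) % n 0 := by
      conv_lhs => rw [Nat.add_mod, hdvd1]
      simp
    have e2 : (((B.1 - C.1) * n 1 + 0 * n 2) + ((C.1 + 1) * n 1 + (B.2 + 1) * n 2)) % n 0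
        = ((B.1 - C.1) * n 1 + 0 * n 2) % n 0 := by
      conv_lhs => rw [Nat.add_mod, hdvd2]
      simp
    calc (0 * n 1 + (B.2 - A.2) * n 2) % n 0
        = ((0 * n 1 + (B.2 - A.2) * n 2) + ((B.1 + 1) * n 1 + (A.2 + 1) * n 2)) % n 0 := e1.symm
      _ = ((B.1 + 1) * n 1 + (B.2 + 1) * n 2) % n 0 := by rw [he1]
      _ = (((B.1 - C.1) * n 1 + 0 * n 2) + ((C.1 + 1) * n 1 + (B.2 + 1) * n 2)) % n 0 := by
          rw [he2]
      _ = ((B.1 - C.1) * n 1 + 0 * n 2) % n 0 := e2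
  have heq := ape_unique hS hpS hu.2 hu'.2 hmodeq
  obtain ⟨hxx, _⟩ := rep_unique hr0 hdq hdr hcop hd0 (by omega) (by omega) heq
  omega

end PFProof

/-- A numerical semigroup minimally generated by three elements has at most two
pseudo-Frobenius numbers. -/
theorem pf_card_le_two_threeGen {S : Set ℕ} {n : Fin 3 → ℕ}
    (hS : IsNumericalSemigroup S) (hmin : IsMinGen S n) :
    (PF S).Finite ∧ (PF S).ncard ≤ 2 := by
  have hsub : PF S ⊆ (fun k : ℕ => (k : ℤ)) '' Sᶜ := by
    intro x hx
    have h0 := PFProof.pf_nonneg hS hmin hx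
    refine ⟨x.toNat, ?_, by simp [Int.toNat_of_nonneg h0]⟩
    simp only [Set.mem_compl_iff]
    intro hmem
    exact hx.1 ⟨x.toNat, hmem, by simp [Int.toNat_of_nonneg h0]⟩
  have hfin : (PF S).Finite := ((hS.2.2).image _).subset hsub
  refine ⟨hfin, ?_⟩
  by_contra hcard
  push_neg at hcard
  rw [Set.ncard_eq_toFinset_card _ hfin] at hcard
  obtain ⟨a, ha, b, hb, c, hc, hab, hac, hbc⟩ := Finset.two_lt_card.mp hcard
  rw [Set.Finite.mem_toFinset] at ha hb hc
  have h0a := PFProof.pf_nonneg hS hmin ha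
  have h0b := PFProof.pf_nonneg hS hmin hb
  have h0c := PFProof.pf_nonneg hS hmin hc
  have hca : ((a.toNat : ℕ) : ℤ) = a := Int.toNat_of_nonneg h0a
  have hcb : ((b.toNat : ℕ) : ℤ) = b := Int.toNat_of_nonneg h0b
  have hcc : ((c.toNat : ℕ) : ℤ) = c := Int.toNat_of_nonneg h0c
  exact PFProof.main hS hmin (hca ▸ ha) (hcb ▸ hb) (hcc ▸ hc)
    (fun h => hab (by rw [← hca, ← hcb, h]))
    (fun h => hac (by rw [← hca, ← hcc, h]))
    (fun h => hbc (by rw [← hcb, ← hcc, h]))
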